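/- Let G be a finite graph and T ⊆ V(G). Orient each edge of G independently and uniformly at random. A 'walk' starts at u following edge directions (or against them, if u ∈ T) and may switch between traveling with and against the edge directions only at vertices of T; edges may be reused. Then for all u, v ∈ V(G), the probability that some such walk from u (started forward) arrives at v moving with the direction of its last edge is at least the probability that some such walk arrives at v moving against the direction of its last edge (with either mode allowed at v if v ∈ T). -/

import Mathlib

open scoped Classical

noncomputable section

/-- Indicator of a proposition, as a real number. -/
def pInd (P : Prop) : ℝ := if P then 1 else 0

variable {V : Type}

/-- Given an orientation `d` of the edges (the edge `e` points from `e.out.1` to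
`e.out.2` when `d e = true`, and the other way when `d e = false`), `dirStep G d a b`
says that there is an edge of `G` directed from `a` to `b`. -/
def dirStep (G : SimpleGraph V) (d : Sym2 V → Bool) (a b : V) : Prop :=
  G.Adj a b ∧ ((s(a, b)).out = (a, b) ∧ d s(a, b) = true ∨
    (s(a, b)).out = (b, a) ∧ d s(a, b) = false)

/-- One step of a walk in model D₂^T on the state space `V × Bool`: the second
component records whether the last edge was traversed with (`true`) or against
(`false`) its orientation. The traversal mode may change only at vertices of `T`. -/
def d2Step (G : SimpleGraph V) (d : Sym2 V → Bool) (T : Set V) :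
    V × Bool → V × Bool → Prop := fun a b =>
  (b.2 = a.2 ∨ a.1 ∈ T) ∧
    ((b.2 = true ∧ dirStep G d a.1 b.1) ∨ (b.2 = false ∧ dirStep G d b.1 a.1))

/-- There is a legal walk in model D₂^T from `u` (started in forward mode) arriving at
`v` with the last edge traversed forward (with either arrival mode acceptable when
`v ∈ T`). -/
def d2ArriveFwd (G : SimpleGraph V) (d : Sym2 V → Bool) (T : Set V) (u v : V) : Prop :=
  ∃ m : Bool, Relation.ReflTransGen (d2Step G d T) (u, true) (v, m) ∧ (m = true ∨ v ∈ T)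

/-- There is a legal walk in model D₂^T from `u` (started in forward mode) arriving at
`v` with the last edge traversed against its orientation (either arrival mode
acceptable when `v ∈ T`). -/
def d2ArriveRev (G : SimpleGraph V) (d : Sym2 V → Bool) (T : Set V) (u v : V) : Prop :=
  ∃ m : Bool, Relation.ReflTransGen (d2Step G d T) (u, true) (v, m) ∧ (m = false ∨ v ∈ T)

namespace BunkbedD2

variable (G : SimpleGraph V) (T : Set V) (u : V)

/-- Reachability from `(u, true)` in the state space. -/
def Reach (d : Sym2 V → Bool) (p : V × Bool) : Prop :=
  Relation.ReflTransGen (d2Step G d T) (u, true) p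

/-- `(x, m)` is reachable, up to the mode being irrelevant at vertices of `T`. -/
def Sb (d : Sym2 V → Bool) (x : V) (m : Bool) : Prop :=
  Reach G T u d (x, m) ∨ (x ∈ T ∧ Reach G T u d (x, !m))

def Tch (d : Sym2 V → Bool) (x : V) : Prop :=
  Sb G T u d x true ∨ Sb G T u d x false

def Bo (d : Sym2 V → Bool) (x : V) : Prop :=
  Sb G T u d x true ∧ Sb G T u d x false

/-- The edges kept (not flipped) by the involution. -/
def keepE (d : Sym2 V → Bool) (e : Sym2 V) : Prop :=
  (∀ x ∈ e, Bo G T u d x) ∨ (∀ x ∈ e, ¬ Tch G T u d x)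

/-- The involution on orientations. -/
noncomputable def psi (d : Sym2 V → Bool) : Sym2 V → Bool :=
  fun e => if keepE G T u d e then d e else !(d e)

/-- The orientation admits a walk from `u` to `T`. -/
def Bd (d : Sym2 V → Bool) : Prop := ∃ t m, t ∈ T ∧ Reach G T u d (t, m)

variable {G T u}

lemma dirStep_congr {d d' : Sym2 V → Bool} {a b : V} (h : d' s(a, b) = d s(a, b)) :
    dirStep G d' a b ↔ dirStep G d a b := by
  unfold dirStep; rw [h]

lemma dirStep_flip {d d' : Sym2 V → Bool} {a b : V} (h : d' s(a, b) = !(d s(a, b))) :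
    dirStep G d' a b ↔ dirStep G d b a := by
  have hsw : s(b, a) = s(a, b) := Sym2.eq_swap
  unfold dirStep
  rw [hsw, h, G.adj_comm]
  constructor
  · rintro ⟨hadj, ⟨h1, h2⟩ | ⟨h1, h2⟩⟩
    · exact ⟨hadj, Or.inr ⟨h1, by simpa using h2⟩⟩
    · exact ⟨hadj, Or.inl ⟨h1, by simpa using h2⟩⟩
  · rintro ⟨hadj, ⟨h1, h2⟩ | ⟨h1, h2⟩⟩
    · exact ⟨hadj, Or.inr ⟨h1, by simp [h2]⟩⟩
    · exact ⟨hadj, Or.inl ⟨h1, by simp [h2]⟩⟩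

lemma stepRev' {d : Sym2 V → Bool} {z y : V} {m' n s : Bool}
    (h : d2Step G d T (z, m') (y, n)) (hs : (!n) = s ∨ y ∈ T) :
    d2Step G d T (y, s) (z, !n) := by
  obtain ⟨_, he⟩ := h
  refine ⟨hs, ?_⟩
  rcases he with ⟨h1, h2⟩ | ⟨h1, h2⟩
  · rw [show n = true from h1]
    exact Or.inr ⟨rfl, h2⟩
  · rw [show n = false from h1]
    exact Or.inl ⟨rfl, h2⟩

lemma swapStart {d : Sym2 V → Bool} {x : V} {m0 m1 : Bool} {q : V × Bool} (hx : x ∈ T)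
    (h : Relation.ReflTransGen (d2Step G d T) (x, m0) q) :
    Relation.ReflTransGen (d2Step G d T) (x, m1) q ∨ q = (x, m0) := by
  rcases Relation.ReflTransGen.cases_head h with heq | ⟨c, hstep, hrest⟩
  · exact Or.inr heq.symm
  · exact Or.inl (Relation.ReflTransGen.head ⟨Or.inr hx, hstep.2⟩ hrest)

lemma revWalk {d : Sym2 V → Bool} {a : V} {i : Bool} {q : V × Bool}
    (h : Relation.ReflTransGen (d2Step G d T) (a, i) q) :
    ((a, i) : V × Bool) = q ∨ ∃ i', (i' = i ∨ a ∈ T) ∧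
      Relation.ReflTransGen (d2Step G d T) (q.1, !q.2) (a, !i') := by
  induction h with
  | refl => exact Or.inl rfl
  | @tail r q' hw hstep ih =>
    obtain ⟨z, m'⟩ := r
    obtain ⟨y, n⟩ := q'
    have hrev : d2Step G d T (y, !n) (z, !n) := stepRev' hstep (Or.inl rfl)
    rcases ih with heq | ⟨i', hi', W⟩
    · have hz : a = z := congrArg Prod.fst heq
      have hm : i = m' := congrArg Prod.snd heq
      subst hz; subst hm
      refine Or.inr ⟨n, ?_, Relation.ReflTransGen.single hrev⟩
      exact hstep.1
    · by_cases hjm : n = m'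
      · subst hjm
        exact Or.inr ⟨i', hi', Relation.ReflTransGen.head hrev W⟩
      · have hzT : z ∈ T := (hstep.1).resolve_left hjm
        have hnm : (!n) = m' := by cases n <;> cases m' <;> simp_all
        rcases swapStart (m1 := !n) hzT W with W' | heq2
        · exact Or.inr ⟨i', hi', Relation.ReflTransGen.head hrev W'⟩
        · have ha : a = z := congrArg Prod.fst heq2
          subst ha
          exact Or.inr ⟨n, Or.inr hzT, Relation.ReflTransGen.single hrev⟩

lemma reachSb_of_T {d : Sym2 V → Bool} {x : V} {m m' : Bool} {q : V × Bool}
    (hR : Reach G T u d (x, m)) (hx : x ∈ T)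
    (W : Relation.ReflTransGen (d2Step G d T) (x, m') q) :
    Sb G T u d q.1 q.2 := by
  rcases Relation.ReflTransGen.cases_head W with heq | ⟨c, hstep, hrest⟩
  · subst heq
    by_cases hmm : m' = m
    · exact Or.inl (by rw [hmm]; exact hR)
    · refine Or.inr ⟨hx, ?_⟩
      have : (!m') = m := by cases m <;> cases m' <;> simp_all
      rw [this]; exact hR
  · have hc : Reach G T u d c := hR.tail ⟨Or.inr hx, hstep.2⟩
    exact Or.inl (by simpa using (show Reach G T u d q from hc.trans hrest))

lemma uSb {d : Sym2 V → Bool} (hB : Bd G T u d) : Sb G T u d u false := by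
  obtain ⟨t, m, hT, hR⟩ := hB
  rcases revWalk hR with heq | ⟨i', hi', W⟩
  · have hu : u = t := congrArg Prod.fst heq
    subst hu
    exact Or.inr ⟨hT, Relation.ReflTransGen.refl⟩
  · have hs := reachSb_of_T hR hT W
    rcases hi' with rfl | huT
    · simpa using hs
    · exact Or.inr ⟨huT, Relation.ReflTransGen.refl⟩

lemma sbT {d : Sym2 V → Bool} {x : V} {m m' : Bool} (hx : x ∈ T) (h : Sb G T u d x m) :
    Sb G T u d x m' := by
  obtain ⟨s, hR⟩ : ∃ s, Reach G T u d (x, s) := by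
    rcases h with h | ⟨_, h⟩
    exacts [⟨_, h⟩, ⟨_, h⟩]
  by_cases hs : s = m'
  · exact Or.inl (by rw [← hs]; exact hR)
  · refine Or.inr ⟨hx, ?_⟩
    have : (!m') = s := by cases s <;> cases m' <;> simp_all
    rw [this]; exact hR

/-- The "⊆" direction: anything reachable for `psi d` is mirror-reachable for `d`. -/
lemma subset {d : Sym2 V → Bool} (hB : Bd G T u d) {p : V × Bool}
    (h : Reach G T u (psi G T u d) p) : Sb G T u d p.1 (!p.2) := by
  induction h with
  | refl => simpa using uSb hB
  | @tail r p' hw hstep ih =>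
    obtain ⟨z, m'⟩ := r
    obtain ⟨y, n⟩ := p'
    obtain ⟨hmode, hedge⟩ := hstep
    by_cases hk : keepE G T u d s(z, y)
    · have hTz : Tch G T u d z := by
        cases m'
        · exact Or.inl (by simpa using ih)
        · exact Or.inr (by simpa using ih)
      rcases hk with hBo | hNT
      · have hBy : Bo G T u d y := hBo y (Sym2.mem_mk_right z y)
        cases n
        · exact (by simpa using hBy.1)
        · exact (by simpa using hBy.2)
      · exact absurd hTz (hNT z (Sym2.mem_mk_left z y))
    · have hval : psi G T u d s(z, y) = !(d s(z, y)) := if_neg hk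
      have hval' : psi G T u d s(y, z) = !(d s(y, z)) := by
        rw [show s(y, z) = s(z, y) from Sym2.eq_swap]; exact hval
      have hf1 : dirStep G (psi G T u d) z y ↔ dirStep G d y z := dirStep_flip hval
      have hf2 : dirStep G (psi G T u d) y z ↔ dirStep G d z y := dirStep_flip hval'
      have key : ∀ s : Bool, Reach G T u d (z, s) → ((!n) = s ∨ z ∈ T) →
          Reach G T u d (y, !n) := by
        intro s hs hc
        refine hs.tail ⟨hc, ?_⟩
        rcases hedge with ⟨h1, hd⟩ | ⟨h1, hd⟩
        · rw [show n = true from h1]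
          exact Or.inr ⟨rfl, hf1.mp hd⟩
        · rw [show n = false from h1]
          exact Or.inl ⟨rfl, hf2.mp hd⟩
      rcases ih with hRz | ⟨hzT, hRz⟩
      · have hc : (!n) = !m' ∨ z ∈ T := by
          rcases hmode with h | h
          · exact Or.inl (by rw [show n = m' from h])
          · exact Or.inr h
        exact Or.inl (key _ hRz hc)
      · exact Or.inl (key _ (by simpa using hRz) (Or.inr hzT))

/-- Walks inside the doubly-reached region transfer to `psi d` unchanged, and the
mirror of every state on such a walk is reachable. -/
lemma walkW {d : Sym2 V → Bool} {p q : V × Bool}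
    (hw : Relation.ReflTransGen (d2Step G d T) p q) (hp : Reach G T u d p) :
    Sb G T u d q.1 (!q.2) →
      Sb G T u d p.1 (!p.2) ∧ Relation.ReflTransGen (d2Step G (psi G T u d) T) p q := by
  induction hw with
  | refl => exact fun hq => ⟨hq, Relation.ReflTransGen.refl⟩
  | @tail r q' hw1 hstep ih =>
    intro hq
    obtain ⟨z, m'⟩ := r
    obtain ⟨y, n⟩ := q'
    obtain ⟨hmode, hedge⟩ := hstep
    have hSbz : Sb G T u d z (!m') := by
      have hRz : Reach G T u d (z, !n) := by
        rcases hq with hR | ⟨hyT, hR⟩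
        · exact hR.tail (stepRev' ⟨hmode, hedge⟩ (Or.inl rfl))
        · exact (by simpa using hR : Reach G T u d (y, n)).tail
            (stepRev' ⟨hmode, hedge⟩ (Or.inr hyT))
      by_cases hnm : n = m'
      · exact Or.inl (by rw [← hnm]; exact hRz)
      · have hzT : z ∈ T := hmode.resolve_left hnm
        have hh : (!n) = m' := by cases n <;> cases m' <;> simp_all
        refine Or.inr ⟨hzT, ?_⟩
        rw [Bool.not_not, ← hh]; exact hRz
    obtain ⟨hSbp, hw'⟩ := ih hSbz
    have hRr : Reach G T u d (z, m') := hp.trans hw1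
    have hRq : Reach G T u d (y, n) := hRr.tail ⟨hmode, hedge⟩
    have hBz : Bo G T u d z := by
      cases m'
      · exact ⟨by simpa using hSbz, Or.inl hRr⟩
      · exact ⟨Or.inl hRr, by simpa using hSbz⟩
    have hBy : Bo G T u d y := by
      cases n
      · exact ⟨by simpa using hq, Or.inl hRq⟩
      · exact ⟨Or.inl hRq, by simpa using hq⟩
    have hk : keepE G T u d s(z, y) := by
      refine Or.inl fun x hx => ?_
      rcases Sym2.mem_iff.mp hx with rfl | rfl
      exacts [hBz, hBy]
    have hval : psi G T u d s(z, y) = d s(z, y) := if_pos hk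
    have hval' : psi G T u d s(y, z) = d s(y, z) := by
      rw [show s(y, z) = s(z, y) from Sym2.eq_swap]; exact hval
    refine ⟨hSbp, hw'.tail ⟨hmode, ?_⟩⟩
    rcases hedge with ⟨h1, h2⟩ | ⟨h1, h2⟩
    · exact Or.inl ⟨h1, (dirStep_congr hval).mpr h2⟩
    · exact Or.inr ⟨h1, (dirStep_congr hval').mpr h2⟩

/-- Doubly-reached vertices stay doubly-reached for `psi d`. -/
lemma boTrans {d : Sym2 V → Bool} {x : V} (h : Bo G T u d x) : Bo G T u (psi G T u d) x := by
  obtain ⟨h1, h0⟩ := h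
  by_cases hx : x ∈ T
  · obtain ⟨j, hR⟩ : ∃ j, Reach G T u d (x, j) := by
      rcases h1 with hR | ⟨_, hR⟩
      exacts [⟨_, hR⟩, ⟨_, hR⟩]
    have hSb : Sb G T u d x (!j) := by
      cases j
      · exact (by simpa using h1)
      · exact (by simpa using h0)
    obtain ⟨-, hw'⟩ := walkW hR Relation.ReflTransGen.refl (by simpa using hSb)
    have hw'' : Reach G T u (psi G T u d) (x, j) := hw'
    constructor
    · cases j
      · exact Or.inr ⟨hx, by simpa using hw''⟩
      · exact Or.inl hw''
    · cases j
      · exact Or.inl hw''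
      · exact Or.inr ⟨hx, by simpa using hw''⟩
  · have hR1 : Reach G T u d (x, true) := h1.resolve_right fun h => hx h.1
    have hR0 : Reach G T u d (x, false) := h0.resolve_right fun h => hx h.1
    obtain ⟨-, hw1⟩ := walkW hR1 Relation.ReflTransGen.refl
      (by simpa using (show Sb G T u d x false from Or.inl hR0))
    obtain ⟨-, hw0⟩ := walkW hR0 Relation.ReflTransGen.refl
      (by simpa using (show Sb G T u d x true from Or.inl hR1))
    exact ⟨Or.inl hw1, Or.inl hw0⟩

/-- The "⊇" direction: anything reachable for `d` is mirror-reachable for `psi d`. -/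
lemma superset {d : Sym2 V → Bool} (hB : Bd G T u d) {p : V × Bool}
    (h : Reach G T u d p) : Sb G T u (psi G T u d) p.1 (!p.2) := by
  induction h with
  | refl =>
    have h1 : Bo G T u d u := ⟨Or.inl Relation.ReflTransGen.refl, uSb hB⟩
    simpa using (boTrans h1).2
  | @tail r p' hw hstep ih =>
    obtain ⟨z, m'⟩ := r
    obtain ⟨y, n⟩ := p'
    obtain ⟨hmode, hedge⟩ := hstep
    by_cases hk : keepE G T u d s(z, y)
    · have hTz : Tch G T u d z := by
        cases m'
        · exact Or.inr (Or.inl hw)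
        · exact Or.inl (Or.inl hw)
      rcases hk with hBo | hNT
      · have hBy : Bo G T u d y := hBo y (Sym2.mem_mk_right z y)
        have hBy' := boTrans hBy
        cases n
        · exact (by simpa using hBy'.1)
        · exact (by simpa using hBy'.2)
      · exact absurd hTz (hNT z (Sym2.mem_mk_left z y))
    · have hval : psi G T u d s(z, y) = !(d s(z, y)) := if_neg hk
      have hval' : psi G T u d s(y, z) = !(d s(y, z)) := by
        rw [show s(y, z) = s(z, y) from Sym2.eq_swap]; exact hval
      have hf1 : dirStep G (psi G T u d) z y ↔ dirStep G d y z := dirStep_flip hval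
      have hf2 : dirStep G (psi G T u d) y z ↔ dirStep G d z y := dirStep_flip hval'
      have key : ∀ s : Bool, Reach G T u (psi G T u d) (z, s) → ((!n) = s ∨ z ∈ T) →
          Reach G T u (psi G T u d) (y, !n) := by
        intro s hs hc
        refine hs.tail ⟨hc, ?_⟩
        rcases hedge with ⟨h1, hd⟩ | ⟨h1, hd⟩
        · rw [show n = true from h1]
          exact Or.inr ⟨rfl, hf2.mpr hd⟩
        · rw [show n = false from h1]
          exact Or.inl ⟨rfl, hf1.mpr hd⟩
      rcases ih with hRz | ⟨hzT, hRz⟩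
      · have hc : (!n) = !m' ∨ z ∈ T := by
          rcases hmode with h | h
          · exact Or.inl (by rw [show n = m' from h])
          · exact Or.inr h
        exact Or.inl (key _ hRz hc)
      · exact Or.inl (key _ (by simpa using hRz) (Or.inr hzT))

lemma sb_psi_of_sb {d : Sym2 V → Bool} (hB : Bd G T u d) {x : V} {m : Bool}
    (h : Sb G T u d x m) : Sb G T u (psi G T u d) x (!m) := by
  rcases h with hR | ⟨hx, hR⟩
  · exact superset hB hR
  · exact sbT hx (by simpa using superset hB hR)

lemma sb_of_sb_psi {d : Sym2 V → Bool} (hB : Bd G T u d) {x : V} {m : Bool}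
    (h : Sb G T u (psi G T u d) x m) : Sb G T u d x (!m) := by
  rcases h with hR | ⟨hx, hR⟩
  · exact subset hB hR
  · exact sbT hx (by simpa using subset hB hR)

lemma boIff {d : Sym2 V → Bool} (hB : Bd G T u d) {x : V} :
    Bo G T u (psi G T u d) x ↔ Bo G T u d x := by
  constructor
  · intro h
    exact ⟨by simpa using sb_of_sb_psi hB h.2, by simpa using sb_of_sb_psi hB h.1⟩
  · intro h
    exact boTrans h

lemma tchIff {d : Sym2 V → Bool} (hB : Bd G T u d) {x : V} :
    Tch G T u (psi G T u d) x ↔ Tch G T u d x := by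
  constructor
  · rintro (h | h)
    · exact Or.inr (by simpa using sb_of_sb_psi hB h)
    · exact Or.inl (by simpa using sb_of_sb_psi hB h)
  · rintro (h | h)
    · exact Or.inr (by simpa using sb_psi_of_sb hB h)
    · exact Or.inl (by simpa using sb_psi_of_sb hB h)

lemma keepIff {d : Sym2 V → Bool} (hB : Bd G T u d) {e : Sym2 V} :
    keepE G T u (psi G T u d) e ↔ keepE G T u d e := by
  unfold keepE
  constructor
  · rintro (h | h)
    · exact Or.inl fun x hx => (boIff hB).mp (h x hx)
    · exact Or.inr fun x hx hc => h x hx ((tchIff hB).mpr hc)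
  · rintro (h | h)
    · exact Or.inl fun x hx => (boIff hB).mpr (h x hx)
    · exact Or.inr fun x hx hc => h x hx ((tchIff hB).mp hc)

lemma psi_invol {d : Sym2 V → Bool} (hB : Bd G T u d) : psi G T u (psi G T u d) = d := by
  funext e
  show (if keepE G T u (psi G T u d) e then psi G T u d e else !(psi G T u d e)) = d e
  by_cases hk : keepE G T u d e
  · rw [if_pos ((keepIff hB).mpr hk)]
    exact if_pos hk
  · rw [if_neg fun h => hk ((keepIff hB).mp h)]
    rw [show psi G T u d e = !(d e) from if_neg hk, Bool.not_not]

lemma bd_psi {d : Sym2 V → Bool} (hB : Bd G T u d) : Bd G T u (psi G T u d) := by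
  obtain ⟨t, m, hT, hR⟩ := id hB
  rcases superset hB hR with hR' | ⟨_, hR'⟩
  · exact ⟨t, _, hT, hR'⟩
  · exact ⟨t, _, hT, hR'⟩

lemma bd_of_false {d : Sym2 V → Bool} {p : V × Bool} (h : Reach G T u d p)
    (hp : p.2 = false) : Bd G T u d := by
  induction h with
  | refl => simp at hp
  | @tail r p' hw hstep ih =>
    rcases hstep.1 with hmode | hT
    · exact ih (by rw [← hmode]; exact hp)
    · exact ⟨r.1, r.2, hT, by simpa using (show Reach G T u d r from hw)⟩

lemma rev_bd {v : V} {d : Sym2 V → Bool} (h : d2ArriveRev G d T u v) : Bd G T u d := by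
  obtain ⟨m, hR, hm⟩ := h
  rcases hm with rfl | hvT
  · exact bd_of_false hR rfl
  · exact ⟨v, m, hvT, hR⟩

lemma fwd_iff {v : V} {d : Sym2 V → Bool} :
    d2ArriveFwd G d T u v ↔ Sb G T u d v true := by
  constructor
  · rintro ⟨m, h, hm⟩
    rcases hm with rfl | hvT
    · exact Or.inl h
    · cases m
      · exact Or.inr ⟨hvT, h⟩
      · exact Or.inl h
  · rintro (h | ⟨hvT, h⟩)
    · exact ⟨true, h, Or.inl rfl⟩
    · exact ⟨false, h, Or.inr hvT⟩

lemma rev_iff {v : V} {d : Sym2 V → Bool} :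
    d2ArriveRev G d T u v ↔ Sb G T u d v false := by
  constructor
  · rintro ⟨m, h, hm⟩
    rcases hm with rfl | hvT
    · exact Or.inl h
    · cases m
      · exact Or.inl h
      · exact Or.inr ⟨hvT, h⟩
  · rintro (h | ⟨hvT, h⟩)
    · exact ⟨false, h, Or.inl rfl⟩
    · exact ⟨true, h, Or.inr hvT⟩

lemma main_iff {v : V} {d : Sym2 V → Bool} (hB : Bd G T u d) :
    d2ArriveRev G d T u v ↔ d2ArriveFwd G (psi G T u d) T u v := by
  rw [rev_iff, fwd_iff]
  constructor
  · intro h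
    simpa using sb_psi_of_sb hB h
  · intro h
    simpa using sb_of_sb_psi hB h

lemma pInd_nonneg {P : Prop} : 0 ≤ pInd P := by
  unfold pInd; split <;> norm_num

lemma pInd_congr {P Q : Prop} (h : P ↔ Q) : pInd P = pInd Q := by
  simp only [pInd, h]

lemma pInd_false {P : Prop} (h : ¬ P) : pInd P = 0 := by
  simp [pInd, h]

end BunkbedD2

/-- The bunkbed theorem for model D₂^T: under a uniformly random orientation, arriving
at `v` in forward mode is at least as likely as arriving at `v` in reverse mode. -/
theorem bunkbed_D2 [Fintype V] [DecidableEq V] (G : SimpleGraph V) (T : Set V)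
    (u v : V) :
    (∑ d : Sym2 V → Bool, pInd (d2ArriveFwd G d T u v)) / 2 ^ Fintype.card (Sym2 V) ≥
    (∑ d : Sym2 V → Bool, pInd (d2ArriveRev G d T u v)) / 2 ^ Fintype.card (Sym2 V) := by
  open BunkbedD2 in
  have h2 : (0 : ℝ) < 2 ^ Fintype.card (Sym2 V) := by positivity
  rw [ge_iff_le, div_le_div_iff_of_pos_right h2]
  set F : (Sym2 V → Bool) → ℝ := fun d => pInd (d2ArriveFwd G d T u v) with hF
  set g : (Sym2 V → Bool) → (Sym2 V → Bool) :=
    fun d => if Bd G T u d then psi G T u d else d with hg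
  have hginv : Function.Involutive g := by
    intro d
    by_cases hB : Bd G T u d
    · simp only [hg, if_pos hB, if_pos (bd_psi hB), psi_invol hB]
    · simp only [hg, if_neg hB, if_neg hB]
  have step1 : ∀ d : Sym2 V → Bool, pInd (d2ArriveRev G d T u v) =
      if Bd G T u d then F (psi G T u d) else 0 := by
    intro d
    by_cases hB : Bd G T u d
    · rw [if_pos hB]
      exact pInd_congr (main_iff hB)
    · rw [if_neg hB]
      exact pInd_false fun h => hB (rev_bd h)
  calc ∑ d : Sym2 V → Bool, pInd (d2ArriveRev G d T u v)
      = ∑ d : Sym2 V → Bool, (if Bd G T u d then F (psi G T u d) else 0) :=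
        Finset.sum_congr rfl fun d _ => step1 d
    _ = ∑ d : Sym2 V → Bool, (if Bd G T u d then F d else 0) := by
        have key : ∀ d : Sym2 V → Bool,
            (if Bd G T u d then F (psi G T u d) else 0) =
            (fun d => if Bd G T u d then F d else 0) (g d) := by
          intro d
          by_cases hB : Bd G T u d
          · simp only [hg, if_pos hB, if_pos (bd_psi hB)]
          · simp only [hg, if_neg hB]
        rw [Finset.sum_congr rfl fun d _ => key d]
        exact Equiv.sum_comp hginv.toPerm (fun d => if Bd G T u d then F d else 0)
    _ ≤ ∑ d : Sym2 V → Bool, F d := by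
        refine Finset.sum_le_sum fun d _ => ?_
        by_cases hB : Bd G T u d
        · rw [if_pos hB]
        · rw [if_neg hB]; exact pInd_nonneg

end
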